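/- Fix a, x ∈ ℝ and define f(r) = Φ((a − r·x)/√(1 − r²)) for r ∈ (−1, 1). Then f is three times differentiable at r = 0 and f′(0) = −φ(a)·g₀(a)·g₁(x) = −φ(a)·x, f″(0) = −φ(a)·g₁(a)·g₂(x) = −φ(a)·a·(x²−1), and f‴(0) = −φ(a)·g₂(a)·g₃(x) = −φ(a)·(a²−1)·(x³−3x). -/

import Mathlib

open MeasureTheory ProbabilityTheory

/-- The probabilists' Hermite polynomials `g₀, g₁, g₂, g₃`. -/
noncomputable def g : ℕ → ℝ → ℝ
  | 0, _ => 1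
  | 1, x => x
  | 2, x => x ^ 2 - 1
  | 3, x => x ^ 3 - 3 * x
  | _, _ => 0

/-- The standard normal density `φ(x) = (2π)^{-1/2} exp(-x²/2)`. -/
noncomputable def phi (x : ℝ) : ℝ := Real.exp (-x ^ 2 / 2) / Real.sqrt (2 * Real.pi)

/-- The standard normal cumulative distribution function `Φ`. -/
noncomputable def Phi (a : ℝ) : ℝ := ((gaussianReal 0 1) (Set.Iio a)).toReal

lemma phi_eq : phi = gaussianPDFReal 0 1 := by
  funext t
  simp only [phi, gaussianPDFReal, NNReal.coe_one, mul_one, sub_zero]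
  rw [div_eq_inv_mul]

lemma continuous_phi : Continuous phi := by
  unfold phi
  exact (Real.continuous_exp.comp (by continuity)).div_const _

lemma integrable_phi : Integrable phi := by
  rw [phi_eq]; exact integrable_gaussianPDFReal 0 1

lemma Phi_eq (y : ℝ) : Phi y = ∫ t in Set.Iio y, phi t := by
  rw [Phi, gaussianReal_apply_eq_integral 0 one_ne_zero,
    ENNReal.toReal_ofReal (integral_nonneg fun t => gaussianPDFReal_nonneg 0 1 t), phi_eq]

lemma hasDerivAt_Phi (y : ℝ) : HasDerivAt Phi (phi y) y := by
  have h : Phi = fun y => (∫ t in Set.Iic (0:ℝ), phi t) + ∫ t in (0:ℝ)..y, phi t := by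
    funext y
    have h2 := intervalIntegral.integral_Iic_sub_Iic (f := phi) (μ := volume)
      integrable_phi.integrableOn integrable_phi.integrableOn (a := 0) (b := y)
    rw [Phi_eq, ← MeasureTheory.integral_Iic_eq_integral_Iio]
    linarith
  rw [h]
  exact (intervalIntegral.integral_hasDerivAt_right
    (integrable_phi.intervalIntegrable)
    (continuous_phi.aestronglyMeasurable.stronglyMeasurableAtFilter)
    continuous_phi.continuousAt).const_add _

lemma hasDerivAt_phi (y : ℝ) : HasDerivAt phi (-y * phi y) y := by
  have h1 : HasDerivAt (fun t : ℝ => -t ^ 2 / 2) (-((2:ℕ) * y ^ (2-1)) / 2) y :=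
    ((hasDerivAt_pow 2 y).neg).div_const 2
  have h2 := (h1.exp).div_const (Real.sqrt (2 * Real.pi))
  have h3 : -y * phi y = Real.exp (-y ^ 2 / 2) * (-((2:ℕ) * y ^ (2-1)) / 2) / Real.sqrt (2 * Real.pi) := by
    unfold phi; push_cast; ring
  rw [h3]; exact h2

noncomputable def S (r : ℝ) : ℝ := Real.sqrt (1 - r ^ 2)
noncomputable def U (a x r : ℝ) : ℝ := (a - r * x) / S r
noncomputable def U1 (a x r : ℝ) : ℝ := -x / S r + (a - r * x) * r / S r ^ 3
noncomputable def U2 (a x r : ℝ) : ℝ :=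
  (a - 3 * r * x) / S r ^ 3 + 3 * r ^ 2 * (a - r * x) / S r ^ 5

lemma S_pos {r : ℝ} (hr : r ^ 2 < 1) : 0 < S r := Real.sqrt_pos.mpr (by linarith)

lemma hasDerivAt_S {r : ℝ} (hr : r ^ 2 < 1) : HasDerivAt S (-r / S r) r := by
  have hne : (1:ℝ) - r ^ 2 ≠ 0 := by nlinarith
  have h := (Real.hasDerivAt_sqrt hne).comp r ((hasDerivAt_pow 2 r).const_sub 1)
  have hval : -r / S r = 1 / (2 * Real.sqrt (1 - r ^ 2)) * -((2:ℕ) * r ^ (2-1)) := by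
    have hs : S r ≠ 0 := (S_pos hr).ne'
    unfold S at hs ⊢
    field_simp
    ring
  rw [hval]; exact h

lemma hasDerivAt_U (a x : ℝ) {r : ℝ} (hr : r ^ 2 < 1) :
    HasDerivAt (U a x) (U1 a x r) r := by
  have hs : S r ≠ 0 := (S_pos hr).ne'
  have hnum : HasDerivAt (fun r : ℝ => a - r * x) (-(1 * x)) r :=
    ((hasDerivAt_id r).mul_const x).const_sub a
  have h := hnum.div (hasDerivAt_S hr) hs
  have hval : U1 a x r = (-(1 * x) * S r - (a - r * x) * (-r / S r)) / S r ^ 2 := by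
    unfold U1
    field_simp
    ring
  rw [hval]; exact h

lemma hasDerivAt_U1 (a x : ℝ) {r : ℝ} (hr : r ^ 2 < 1) :
    HasDerivAt (U1 a x) (U2 a x r) r := by
  have hs : S r ≠ 0 := (S_pos hr).ne'
  have hS := hasDerivAt_S hr
  have h1 := (hasDerivAt_const r (-x)).div hS hs
  have hnum : HasDerivAt (fun r : ℝ => (a - r * x) * r) (-(1 * x) * r + (a - r * x) * 1) r :=
    (((hasDerivAt_id r).mul_const x).const_sub a).mul (hasDerivAt_id r)
  have hden := hS.pow 3
  have h2 := hnum.div hden (pow_ne_zero 3 hs)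
  have h := h1.add h2
  have hval : U2 a x r =
      (0 * S r - -x * (-r / S r)) / S r ^ 2 +
        ((-(1 * x) * r + (a - r * x) * 1) * S r ^ 3 -
          (a - r * x) * r * ((3:ℕ) * S r ^ (3-1) * (-r / S r))) / (S r ^ 3) ^ 2 := by
    unfold U2
    field_simp
    ring
  rw [hval]; exact h

lemma S_zero : S 0 = 1 := by norm_num [S]

lemma U_zero (a x : ℝ) : U a x 0 = a := by norm_num [U, S_zero]

lemma U1_zero (a x : ℝ) : U1 a x 0 = -x := by norm_num [U1, S_zero]

lemma U2_zero (a x : ℝ) : U2 a x 0 = a := by norm_num [U2, S_zero]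

lemma hasDerivAt_U2 (a x : ℝ) : HasDerivAt (U2 a x) (-(3 * x)) 0 := by
  have hr : (0:ℝ) ^ 2 < 1 := by norm_num
  have hs : S 0 ≠ 0 := (S_pos hr).ne'
  have hS := hasDerivAt_S hr
  have hnum1 : HasDerivAt (fun r : ℝ => a - 3 * r * x) (-(3 * 1 * x)) 0 :=
    ((((hasDerivAt_id 0).const_mul 3).mul_const x).const_sub a)
  have h1 := hnum1.fun_div (hS.fun_pow 3) (pow_ne_zero 3 hs)
  have hnum2 : HasDerivAt (fun r : ℝ => 3 * r ^ 2 * (a - r * x))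
      (3 * ((2:ℕ) * (0:ℝ) ^ (2-1)) * (a - 0 * x) + 3 * (0:ℝ) ^ 2 * -(1 * x)) 0 :=
    ((hasDerivAt_pow 2 0).const_mul 3).mul (((hasDerivAt_id 0).mul_const x).const_sub a)
  have h2 := hnum2.fun_div (hS.fun_pow 5) (pow_ne_zero 5 hs)
  have h := h1.fun_add h2
  refine h.congr_deriv ?_
  norm_num [S_zero]

/-- Fix `a, x ∈ ℝ` and let `f(r) = Φ((a − r x)/√(1 − r²))`.  Then `f` is three times
differentiable at `r = 0`, with `f′(0) = −φ(a) g₀(a) g₁(x)`,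
`f″(0) = −φ(a) g₁(a) g₂(x)` and `f‴(0) = −φ(a) g₂(a) g₃(x)`. -/
theorem deriv_Phi_expansion (a x : ℝ) :
    let f : ℝ → ℝ := fun r => Phi ((a - r * x) / Real.sqrt (1 - r ^ 2))
    DifferentiableAt ℝ f 0 ∧
    DifferentiableAt ℝ (deriv f) 0 ∧
    DifferentiableAt ℝ (deriv (deriv f)) 0 ∧
    deriv f 0 = -phi a * g 0 a * g 1 x ∧
    deriv (deriv f) 0 = -phi a * g 1 a * g 2 x ∧
    deriv (deriv (deriv f)) 0 = -phi a * g 2 a * g 3 x := by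
  intro f
  have h0 : (0:ℝ) ∈ Set.Ioo (-1:ℝ) 1 := by norm_num
  have hmem : Set.Ioo (-1:ℝ) 1 ∈ nhds (0:ℝ) := isOpen_Ioo.mem_nhds h0
  have hsq : ∀ r ∈ Set.Ioo (-1:ℝ) 1, r ^ 2 < 1 := by
    rintro r ⟨h1, h2⟩; nlinarith
  -- first derivative
  have hf : ∀ r ∈ Set.Ioo (-1:ℝ) 1,
      HasDerivAt f (phi (U a x r) * U1 a x r) r := fun r hr =>
    (hasDerivAt_Phi (U a x r)).comp r (hasDerivAt_U a x (hsq r hr))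
  have hEq1 : deriv f =ᶠ[nhds 0] fun r => phi (U a x r) * U1 a x r :=
    Filter.eventuallyEq_of_mem hmem fun r hr => (hf r hr).deriv
  -- second derivative
  have hphiU : ∀ r ∈ Set.Ioo (-1:ℝ) 1,
      HasDerivAt (fun r => phi (U a x r)) (-U a x r * phi (U a x r) * U1 a x r) r := fun r hr =>
    (hasDerivAt_phi (U a x r)).comp r (hasDerivAt_U a x (hsq r hr))
  have hF1 : ∀ r ∈ Set.Ioo (-1:ℝ) 1,
      HasDerivAt (fun r => phi (U a x r) * U1 a x r)
        (-U a x r * phi (U a x r) * U1 a x r * U1 a x r + phi (U a x r) * U2 a x r) r :=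
    fun r hr => (hphiU r hr).mul (hasDerivAt_U1 a x (hsq r hr))
  have hEq2 : deriv (deriv f) =ᶠ[nhds 0]
      fun r => -U a x r * phi (U a x r) * U1 a x r * U1 a x r + phi (U a x r) * U2 a x r := by
    refine hEq1.deriv.trans (Filter.eventuallyEq_of_mem hmem fun r hr => (hF1 r hr).deriv)
  -- third derivative at 0
  have hU' := hasDerivAt_U a x (hsq 0 h0)
  have hU1' := hasDerivAt_U1 a x (hsq 0 h0)
  have hU2' := hasDerivAt_U2 a x
  have hP := hphiU 0 h0
  have hF2 := (((hU'.fun_neg.fun_mul hP).fun_mul hU1').fun_mul hU1').fun_add (hP.fun_mul hU2')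
  constructor
  · exact (hf 0 h0).differentiableAt
  refine ⟨?_, ?_, ?_, ?_, ?_⟩
  · exact (hF1 0 h0).differentiableAt.congr_of_eventuallyEq hEq1
  · exact hF2.differentiableAt.congr_of_eventuallyEq hEq2
  · rw [(hf 0 h0).deriv, U_zero, U1_zero]
    simp only [g]; ring
  · rw [hEq1.deriv_eq, (hF1 0 h0).deriv, U_zero, U1_zero, U2_zero]
    simp only [g]; ring
  · rw [hEq2.deriv_eq, hF2.deriv, U_zero, U1_zero, U2_zero]
    simp only [g]; ring
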